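/- Let B₊ be an oriented incidence matrix of a connected graph with diagonal weight matrix W₊ having strictly positive entries, set L₊ = B₊·W₊·B₊ᵀ with Moore–Penrose pseudoinverse L₊†, let B₋ be an oriented incidence matrix of the negative edges with D diagonal having strictly positive entries d_1, …, d_m, and set L = L₊ − B₋·D·B₋ᵀ. If L is positive semidefinite, then Σ_{k=1}^{m} 1/d_k ≥ trace(B₋ᵀ·L₊†·B₋) (the total effective resistance over the node pairs incident to the negative edges). -/

import Mathlib

open Matrix

/-- `B` is an oriented incidence matrix: every column has exactly one `1`,
exactly one `-1`, and zeros elsewhere. -/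
def IsIncidenceMatrix {V E : Type*} (B : Matrix V E ℝ) : Prop :=
  ∀ e : E, ∃ i j : V, i ≠ j ∧ B i e = 1 ∧ B j e = -1 ∧
    ∀ k : V, k ≠ i → k ≠ j → B k e = 0

/-- Uniqueness of the Moore–Penrose pseudoinverse. -/
lemma pinv_unique_aux {n : Type*} [Fintype n] [DecidableEq n]
    (A X Y : Matrix n n ℝ)
    (x1 : A * X * A = A) (x2 : X * A * X = X)
    (x3 : (A * X)ᵀ = A * X) (x4 : (X * A)ᵀ = X * A)
    (y1 : A * Y * A = A) (y2 : Y * A * Y = Y)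
    (y3 : (A * Y)ᵀ = A * Y) (y4 : (Y * A)ᵀ = Y * A) : X = Y := by
  have hAXY : A * Y = A * X := by
    calc A * Y = (A * X * A) * Y := by rw [x1]
    _ = (A * X) * (A * Y) := by rw [Matrix.mul_assoc (A * X) A Y]
    _ = ((A * Y) * (A * X))ᵀ := by rw [Matrix.transpose_mul, x3, y3]
    _ = ((A * Y * A) * X)ᵀ := by rw [Matrix.mul_assoc (A * Y) A X]
    _ = (A * X)ᵀ := by rw [y1]
    _ = A * X := x3
  have hYAX : Y * A = X * A := by
    calc Y * A = Y * (A * X * A) := by rw [x1]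
    _ = (Y * A) * (X * A) := by rw [Matrix.mul_assoc Y A (X * A), Matrix.mul_assoc A X A]
    _ = ((X * A) * (Y * A))ᵀ := by rw [Matrix.transpose_mul, x4, y4]
    _ = (X * (A * Y * A))ᵀ := by rw [Matrix.mul_assoc X A (Y * A), Matrix.mul_assoc A Y A]
    _ = (X * A)ᵀ := by rw [y1]
    _ = X * A := x4
  calc X = X * A * X := x2.symm
  _ = X * (A * X) := Matrix.mul_assoc X A X
  _ = X * (A * Y) := by rw [hAXY]
  _ = (X * A) * Y := (Matrix.mul_assoc X A Y).symm
  _ = (Y * A) * Y := by rw [hYAX]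
  _ = Y := y2

lemma mulVec_dot {n : Type*} [Fintype n] (M : Matrix n n ℝ) (u v : n → ℝ) :
    (M *ᵥ u) ⬝ᵥ v = u ⬝ᵥ (Mᵀ *ᵥ v) := by
  rw [dotProduct_comm, dotProduct_mulVec, Matrix.mulVec_transpose,
    dotProduct_comm]

/-- Quadratic form of `B * diagonal w * Bᵀ`. -/
lemma quadform_eq {V E : Type*} [Fintype V] [Fintype E] [DecidableEq E]
    (B : Matrix V E ℝ) (w : E → ℝ) (y : V → ℝ) :
    y ⬝ᵥ ((B * Matrix.diagonal w * Bᵀ) *ᵥ y) = ∑ e : E, w e * ((Bᵀ *ᵥ y) e) ^ 2 := by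
  rw [← Matrix.mulVec_mulVec, ← Matrix.mulVec_mulVec]
  rw [dotProduct_mulVec, ← Matrix.mulVec_transpose]
  simp only [dotProduct, Matrix.mulVec_diagonal]
  exact Finset.sum_congr rfl fun e _ => by ring

theorem psd_implies_total_resistance_bound
    {V Ep Em : Type*} [Fintype V] [Fintype Ep] [Fintype Em]
    [DecidableEq V] [DecidableEq Ep] [DecidableEq Em] [Nonempty V]
    (Bp : Matrix V Ep ℝ) (Bm : Matrix V Em ℝ)
    (hBp : IsIncidenceMatrix Bp) (hBm : IsIncidenceMatrix Bm)
    (wp : Ep → ℝ) (hwp : ∀ e, 0 < wp e)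
    (d : Em → ℝ) (hd : ∀ e, 0 < d e)
    -- the positive graph is connected
    (hConn : LinearMap.ker Bpᵀ.mulVecLin = Submodule.span ℝ {(fun _ : V => (1 : ℝ))})
    -- `Ld` is the Moore–Penrose pseudoinverse of `L₊ = B₊·W₊·B₊ᵀ`
    (Ld : Matrix V V ℝ)
    (hp1 : (Bp * Matrix.diagonal wp * Bpᵀ) * Ld * (Bp * Matrix.diagonal wp * Bpᵀ) =
      Bp * Matrix.diagonal wp * Bpᵀ)
    (hp2 : Ld * (Bp * Matrix.diagonal wp * Bpᵀ) * Ld = Ld)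
    (hp3 : ((Bp * Matrix.diagonal wp * Bpᵀ) * Ld)ᵀ = (Bp * Matrix.diagonal wp * Bpᵀ) * Ld)
    (hp4 : (Ld * (Bp * Matrix.diagonal wp * Bpᵀ))ᵀ = Ld * (Bp * Matrix.diagonal wp * Bpᵀ))
    (hPSD : (Bp * Matrix.diagonal wp * Bpᵀ - Bm * Matrix.diagonal d * Bmᵀ).PosSemidef) :
    (Bmᵀ * Ld * Bm).trace ≤ ∑ k : Em, (d k)⁻¹ := by
  have hAsym : (Bp * Matrix.diagonal wp * Bpᵀ)ᵀ = Bp * Matrix.diagonal wp * Bpᵀ := by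
    rw [Matrix.transpose_mul, Matrix.transpose_mul, Matrix.transpose_transpose,
      Matrix.diagonal_transpose, Matrix.mul_assoc]
  set A : Matrix V V ℝ := Bp * Matrix.diagonal wp * Bpᵀ with hA
  clear_value A
  -- `Ld` is symmetric
  have hsym : Ld = Ldᵀ := by
    refine pinv_unique_aux A Ld Ldᵀ hp1 hp2 hp3 hp4 ?_ ?_ ?_ ?_
    · have h := congrArg Matrix.transpose hp1
      rw [Matrix.transpose_mul, Matrix.transpose_mul, hAsym, ← Matrix.mul_assoc] at h
      exact h
    · have h := congrArg Matrix.transpose hp2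
      rw [Matrix.transpose_mul, Matrix.transpose_mul, hAsym, ← Matrix.mul_assoc] at h
      exact h
    · have h : A * Ldᵀ = Ld * A := by
        calc A * Ldᵀ = (Ld * Aᵀ)ᵀ := by
              rw [Matrix.transpose_mul, Matrix.transpose_transpose]
        _ = (Ld * A)ᵀ := by rw [hAsym]
        _ = Ld * A := hp4
      rw [h]; exact hp4
    · have h : Ldᵀ * A = A * Ld := by
        calc Ldᵀ * A = (Aᵀ * Ld)ᵀ := by
              rw [Matrix.transpose_mul, Matrix.transpose_transpose]
        _ = (A * Ld)ᵀ := by rw [hAsym]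
        _ = A * Ld := hp3
      rw [h]; exact hp3
  -- per-edge bound on the diagonal entries
  have key : ∀ k : Em, (Bmᵀ * Ld * Bm) k k ≤ (d k)⁻¹ := by
    intro k
    set b : V → ℝ := fun i => Bm i k with hb
    set x : V → ℝ := Ld *ᵥ b with hx
    set r : ℝ := b ⬝ᵥ x with hr
    have hBmx : (Bmᵀ *ᵥ x) k = r := by
      rw [hr]
      simp [Matrix.mulVec, dotProduct, hb]
    have hentry : (Bmᵀ * Ld * Bm) k k = r := by
      have h1 : (Bmᵀ * Ld * Bm) k k = (Bmᵀ *ᵥ x) k := by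
        rw [hx, Matrix.mulVec_mulVec]
        simp [Matrix.mul_apply, Matrix.mulVec, dotProduct, hb]
      rw [h1, hBmx]
    have hxAx : x ⬝ᵥ (A *ᵥ x) = r := by
      nth_rewrite 1 [hx]
      rw [mulVec_dot, ← hsym, Matrix.mulVec_mulVec, hx, Matrix.mulVec_mulVec,
        hp2, hr, hx]
    have hlow : d k * r ^ 2 ≤ x ⬝ᵥ ((Bm * Matrix.diagonal d * Bmᵀ) *ᵥ x) := by
      rw [quadform_eq, ← hBmx]
      exact Finset.single_le_sum (f := fun e => d e * ((Bmᵀ *ᵥ x) e) ^ 2)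
        (fun e _ => mul_nonneg (hd e).le (sq_nonneg _)) (Finset.mem_univ k)
    have hq := hPSD.dotProduct_mulVec_nonneg x
    rw [star_trivial, Matrix.sub_mulVec, dotProduct_sub, hxAx] at hq
    have hkey : d k * r ^ 2 ≤ r := by linarith
    have hdk := hd k
    have hinv : d k * (d k)⁻¹ = 1 := mul_inv_cancel₀ hdk.ne'
    rw [hentry]
    nlinarith [sq_nonneg (d k * r - 1), mul_le_mul_of_nonneg_left hkey hdk.le]
  calc (Bmᵀ * Ld * Bm).trace = ∑ k : Em, (Bmᵀ * Ld * Bm) k k := rfl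
  _ ≤ ∑ k : Em, (d k)⁻¹ := Finset.sum_le_sum fun k _ => key k
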